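/- For an n×n complex matrix A with A†A ≤ I_n and Ā = √(I_n − A†A), it holds that |det(A)|^{2/n} + |det(Ā)|^{2/n} ≤ 1. -/

import Mathlib

open Matrix ComplexOrder

namespace Matrix.PosSemidef

/-- The positive semidefinite square root of a positive semidefinite matrix
(the definition removed from Mathlib, restored with its old meaning). -/
noncomputable def sqrt {n : Type*} [Fintype n] [DecidableEq n] {𝕜 : Type*} [RCLike 𝕜]
    {A : Matrix n n 𝕜} (hA : A.PosSemidef) : Matrix n n 𝕜 :=
  (hA.1.eigenvectorUnitary : Matrix n n 𝕜) * diagonal ((↑) ∘ Real.sqrt ∘ hA.1.eigenvalues) *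
    (star (hA.1.eigenvectorUnitary : Matrix n n 𝕜))

theorem sqrt_mul_self {n : Type*} [Fintype n] [DecidableEq n] {𝕜 : Type*} [RCLike 𝕜]
    {A : Matrix n n 𝕜} (hA : A.PosSemidef) : hA.sqrt * hA.sqrt = A := by
  unfold sqrt
  have hUU' : star (hA.1.eigenvectorUnitary : Matrix n n 𝕜) * (hA.1.eigenvectorUnitary : Matrix n n 𝕜) = 1 :=
    (Matrix.mem_unitaryGroup_iff').mp hA.1.eigenvectorUnitary.2
  calc _ = (hA.1.eigenvectorUnitary : Matrix n n 𝕜) * (diagonal ((↑) ∘ Real.sqrt ∘ hA.1.eigenvalues) *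
        (star (hA.1.eigenvectorUnitary : Matrix n n 𝕜) * (hA.1.eigenvectorUnitary : Matrix n n 𝕜)) *
        diagonal ((↑) ∘ Real.sqrt ∘ hA.1.eigenvalues)) * star (hA.1.eigenvectorUnitary : Matrix n n 𝕜) := by
        simp only [Matrix.mul_assoc]
    _ = (hA.1.eigenvectorUnitary : Matrix n n 𝕜) * diagonal (RCLike.ofReal ∘ hA.1.eigenvalues) *
        star (hA.1.eigenvectorUnitary : Matrix n n 𝕜) := by
        rw [hUU', Matrix.mul_one, diagonal_mul_diagonal]
        simp only [Function.comp_def, ← RCLike.ofReal_mul, Real.mul_self_sqrt, hA.eigenvalues_nonneg]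
    _ = A := by
        conv_rhs => rw [hA.1.spectral_theorem]
        rfl

end Matrix.PosSemidef

/-- for an `n×n` complex matrix `A` with `A†A ≤ I` and
`Ā = √(I − A†A)`, one has `|det A|^(2/n) + |det Ā|^(2/n) ≤ 1`. -/
theorem det_measurement_bound (n : ℕ) (hn : 0 < n) (A : Matrix (Fin n) (Fin n) ℂ)
    (h : (1 - Aᴴ * A).PosSemidef) :
    ‖A.det‖ ^ ((2 : ℝ) / n) + ‖h.sqrt.det‖ ^ ((2 : ℝ) / n) ≤ 1 := by
  set hB := posSemidef_conjTranspose_mul_self A with hBdef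
  set lam := hB.1.eigenvalues with hlam
  -- eigenvalue bounds
  have hge : ∀ i, 0 ≤ lam i := hB.eigenvalues_nonneg
  have hle : ∀ i, lam i ≤ 1 := by
    intro i
    set v : Fin n → ℂ := ⇑(hB.1.eigenvectorBasis i) with hv
    have h0 := h.re_dotProduct_nonneg v
    rw [sub_mulVec, one_mulVec, dotProduct_sub, map_sub] at h0
    have h1 : RCLike.re (star v ⬝ᵥ v) = 1 := by
      have h3 := (EuclideanSpace.inner_eq_star_dotProduct (hB.1.eigenvectorBasis i)
        (hB.1.eigenvectorBasis i)).symm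
      rw [inner_self_eq_norm_sq_to_K, hB.1.eigenvectorBasis.orthonormal.1 i] at h3
      have := congrArg RCLike.re h3
      rw [dotProduct_comm]
      simpa [v] using this
    have h2 := hB.1.eigenvalues_eq i
    rw [← hv] at h2
    rw [← hlam] at h2
    linarith [h0, h1, h2.symm.le]
  -- determinant identities
  set U : Matrix (Fin n) (Fin n) ℂ := ↑hB.1.eigenvectorUnitary with hU
  have hUU : U * star U = 1 := (Matrix.mem_unitaryGroup_iff).mp hB.1.eigenvectorUnitary.2
  have hUU' : star U * U = 1 := (Matrix.mem_unitaryGroup_iff').mp hB.1.eigenvectorUnitary.2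
  have hsp : (1 : Matrix (Fin n) (Fin n) ℂ) - Aᴴ * A
      = U * (1 - diagonal (Complex.ofReal ∘ lam)) * star U := by
    rw [mul_sub, sub_mul, mul_one, hUU]
    conv_lhs => rw [hB.1.spectral_theorem]
    rfl
  have hdet2 : ((1 : Matrix (Fin n) (Fin n) ℂ) - Aᴴ * A).det = ∏ i, (1 - (lam i : ℂ)) := by
    rw [hsp, det_mul, det_mul, mul_comm, ← mul_assoc, ← det_mul, hUU', det_one, one_mul]
    rw [show (1 : Matrix (Fin n) (Fin n) ℂ) - diagonal (Complex.ofReal ∘ lam)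
      = diagonal (fun i => 1 - (lam i : ℂ)) from by
        rw [← diagonal_one, diagonal_sub]; rfl, det_diagonal]
  have hdet1 : ((‖A.det‖ : ℂ))^2 = ∏ i, (lam i : ℂ) := by
    have e1 : (Aᴴ * A).det = ((‖A.det‖ : ℂ))^2 := by
      rw [det_mul, det_conjTranspose, Complex.star_def, Complex.conj_mul']
    rw [← e1, hB.1.det_eq_prod_eigenvalues]; rfl
  -- from complex to real products
  have habs1 : ‖A.det‖^2 = ∏ i, lam i := by
    have := congrArg Complex.re hdet1
    simpa [← Complex.ofReal_prod, ← Complex.ofReal_pow] using this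
  have habs2 : ‖h.sqrt.det‖^2 = ∏ i, (1 - lam i) := by
    have hsq : h.sqrt.det ^ 2 = ∏ i, (1 - (lam i : ℂ)) := by
      rw [← hdet2, pow_two, ← det_mul, h.sqrt_mul_self]
    have := congrArg norm hsq
    rw [norm_pow, norm_prod] at this
    rw [this]
    apply Finset.prod_congr rfl
    intro i _
    rw [show (1 : ℂ) - (lam i : ℂ) = ((1 - lam i : ℝ) : ℂ) by push_cast; ring,
      Complex.norm_real, Real.norm_eq_abs, abs_of_nonneg (by linarith [hle i])]
  -- rpow gymnastics
  have key : ∀ x : ℝ, 0 ≤ x → x ^ ((2:ℝ)/n) = (x ^ 2) ^ ((n:ℝ)⁻¹) := by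
    intro x hx
    rw [show (2:ℝ)/n = 2 * (n:ℝ)⁻¹ by ring, Real.rpow_mul hx, Real.rpow_two]
  rw [key _ (norm_nonneg _), key _ (norm_nonneg _), habs1, habs2]
  have h1le : ∀ i, 0 ≤ 1 - lam i := fun i => by linarith [hle i]
  rw [← Real.finset_prod_rpow Finset.univ lam (fun i _ => hge i) _,
    ← Real.finset_prod_rpow Finset.univ (fun i => 1 - lam i) (fun i _ => h1le i) _]
  have am1 := Real.geom_mean_le_arith_mean_weighted Finset.univ (fun _ => (n:ℝ)⁻¹) lam
    (fun i _ => by positivity) (by simp only [Finset.sum_const, Finset.card_univ, Fintype.card_fin, nsmul_eq_mul]; field_simp) (fun i _ => hge i)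
  have am2 := Real.geom_mean_le_arith_mean_weighted Finset.univ (fun _ => (n:ℝ)⁻¹)
    (fun i => 1 - lam i) (fun i _ => by positivity) (by simp only [Finset.sum_const, Finset.card_univ, Fintype.card_fin, nsmul_eq_mul]; field_simp) (fun i _ => h1le i)
  have : (∑ i : Fin n, (n:ℝ)⁻¹ * lam i) + ∑ i : Fin n, (n:ℝ)⁻¹ * (1 - lam i) = 1 := by
    rw [← Finset.sum_add_distrib]
    have : ∀ i : Fin n, (n:ℝ)⁻¹ * lam i + (n:ℝ)⁻¹ * (1 - lam i) = (n:ℝ)⁻¹ := fun i => by ring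
    simp only [this, Finset.sum_const, Finset.card_univ, Fintype.card_fin, nsmul_eq_mul]
    field_simp
  linarith [am1, am2]
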